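/- For every positive integer d, the generating function for the number of d-fold partition diamonds is given by ∑_{n≥0} r_d(n) q^n = ∏_{n≥1} F_d(q^{(n-1)(d+1)+1}, q) / (1 - q^n), as an identity of formal power series in q over ℤ. -/

import Mathlib

open Finset PowerSeries

/-- A `d`-fold partition diamond: nonnegative integers `a 0, a 1, …` together with
`b k j` (representing `b_{k+1, j+1}`) satisfying `a k ≥ b k j ≥ a (k+1)`,
with all but finitely many entries equal to zero. -/
structure DFold (d : ℕ) where
  a : ℕ → ℕ
  b : ℕ → Fin d → ℕ
  upper : ∀ k j, b k j ≤ a k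
  lower : ∀ k j, a (k + 1) ≤ b k j
  fin : ∃ N, ∀ k, N ≤ k → a k = 0

/-- `rFold d n`: the number of `d`-fold partition diamonds of `n` (all nodes summed). -/
noncomputable def rFold (d n : ℕ) : ℕ :=
  Set.ncard {D : DFold d | ((∑ᶠ k, D.a k) + ∑ᶠ k, ∑ j, D.b k j) = n}

namespace DFoldAux

theorem DFold.ext' {d : ℕ} {D D' : DFold d} (ha : D.a = D'.a) (hb : D.b = D'.b) : D = D' := by
  cases D; cases D'; cases ha; cases hb; rfl

/-- weight with top multiplier `t` -/
noncomputable def wt {d : ℕ} (t : ℕ) (D : DFold d) : ℕ :=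
  t * D.a 0 + (∑ᶠ k, D.a (k + 1)) + ∑ᶠ k, ∑ j, D.b k j

def linkSet (d t n : ℕ) : Set (ℕ × (Fin d → ℕ)) :=
  {p | (∀ j, p.2 j ≤ p.1) ∧ t * p.1 + ∑ j, p.2 j = n}

def linkFinset (d t n : ℕ) : Finset (ℕ × (Fin d → ℕ)) :=
  ((range (n+1)) ×ˢ Fintype.piFinset (fun _ : Fin d => range (n+1))).filter
    (fun p => (∀ j, p.2 j ≤ p.1) ∧ t * p.1 + ∑ j, p.2 j = n)

def Lcnt (d t n : ℕ) : ℕ := (linkFinset d t n).card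

noncomputable def Acnt (d t m : ℕ) : ℕ := {D : DFold d | wt t D = m}.ncard

noncomputable def Mser (d t : ℕ) : ℤ⟦X⟧ := PowerSeries.mk fun m => (Lcnt d t m : ℤ)

noncomputable def Dser (d : ℕ) : ℕ → ℕ → ℤ⟦X⟧
  | 0, _ => 1
  | (L+1), t => Mser d t * Dser d L (t + d + 1)

lemma coe_linkFinset {d t n : ℕ} (ht : 1 ≤ t) : (linkFinset d t n : Set (ℕ × (Fin d → ℕ))) = linkSet d t n := by
  ext ⟨α, β⟩
  simp only [linkFinset, linkSet, coe_filter, Set.mem_setOf_eq, mem_product, mem_range,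
    Fintype.mem_piFinset, Set.mem_sep_iff]
  constructor
  · rintro ⟨-, h⟩; exact h
  · rintro ⟨h1, h2⟩
    have hα : α ≤ n := le_trans (le_trans (Nat.le_mul_of_pos_left _ ht) (Nat.le_add_right _ _)) h2.le
    exact ⟨⟨Nat.lt_succ_of_le hα, fun j => Nat.lt_succ_of_le ((h1 j).trans hα)⟩, h1, h2⟩

lemma Lcnt_eq_ncard {d t n : ℕ} (ht : 1 ≤ t) : Lcnt d t n = (linkSet d t n).ncard := by
  rw [← coe_linkFinset (d := d) (n := n) ht, Set.ncard_coe_finset]; rfl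

lemma Lcnt_zero {d t : ℕ} (ht : 1 ≤ t) : Lcnt d t 0 = 1 := by
  rw [Lcnt_eq_ncard ht]
  convert Set.ncard_singleton ((0, fun _ => 0) : ℕ × (Fin d → ℕ))
  ext ⟨α, β⟩
  simp only [linkSet, Set.mem_setOf_eq, Set.mem_singleton_iff, Prod.mk.injEq]
  constructor
  · rintro ⟨h1, h2⟩
    have hα : α = 0 := by
      rcases Nat.eq_zero_or_pos α with h | h
      · exact h
      · have h3 : t ≤ t * α := Nat.le_mul_of_pos_right _ h
        omega
    subst hα
    refine ⟨rfl, funext fun j => Nat.le_zero.mp (h1 j)⟩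
  · rintro ⟨rfl, rfl⟩; simp

lemma Lcnt_eq_zero {d t n : ℕ} (h0 : 0 < n) (hn : n < t) : Lcnt d t n = 0 := by
  rw [Lcnt, Finset.card_eq_zero]
  ext ⟨α, β⟩
  simp only [linkFinset, mem_filter, notMem_empty, iff_false]
  rintro ⟨-, h1, h2⟩
  rcases Nat.eq_zero_or_pos α with rfl | h
  · have hb : ∀ j, β j = 0 := fun j => Nat.le_zero.mp (h1 j)
    rw [Finset.sum_congr rfl (fun j _ => hb j)] at h2
    simp at h2
    omega
  · have h3 : t ≤ t * α := Nat.le_mul_of_pos_right _ h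
    omega

noncomputable def rep (d t K : ℕ) : ℤ⟦X⟧ :=
  ∑ α ∈ range (K+1), (X:ℤ⟦X⟧)^(t*α) * (∑ β ∈ range (α+1), (X:ℤ⟦X⟧)^β)^d

lemma coeff_Mser (d t n K : ℕ) (ht : 1 ≤ t) (hn : n ≤ K) :
    (coeff (R := ℤ) n) (Mser d t) =
      ∑ α ∈ range (K+1), ∑ f ∈ Fintype.piFinset (fun _ : Fin d => range (K+1)),
        (if (∀ j, f j ≤ α) ∧ t*α + ∑ j, f j = n then 1 else 0 : ℤ) := by
  rw [Mser, coeff_mk, Lcnt, linkFinset, Finset.card_filter]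
  push_cast
  rw [Finset.sum_product]
  have inner : ∀ α : ℕ,
      (∑ f ∈ Fintype.piFinset (fun _ : Fin d => range (n+1)),
        (if (∀ j, f j ≤ α) ∧ t*α + ∑ j, f j = n then 1 else 0 : ℤ)) =
      ∑ f ∈ Fintype.piFinset (fun _ : Fin d => range (K+1)),
        (if (∀ j, f j ≤ α) ∧ t*α + ∑ j, f j = n then 1 else 0 : ℤ) := by
    intro α
    apply Finset.sum_subset
    · intro f hf
      simp only [Fintype.mem_piFinset, mem_range] at hf ⊢
      intro j; have := hf j; omega
    · intro f hf hnf
      rw [if_neg]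
      rintro ⟨h1, h2⟩
      apply hnf
      simp only [Fintype.mem_piFinset, mem_range] at hf ⊢
      intro j
      have h3 : f j ≤ ∑ j, f j := Finset.single_le_sum (f := fun j => f j) (fun i _ => Nat.zero_le _) (mem_univ j)
      omega
  calc (∑ α ∈ range (n+1), ∑ f ∈ Fintype.piFinset (fun _ : Fin d => range (n+1)),
        (if (∀ j, f j ≤ α) ∧ t*α + ∑ j, f j = n then 1 else 0 : ℤ))
      = ∑ α ∈ range (n+1), ∑ f ∈ Fintype.piFinset (fun _ : Fin d => range (K+1)),
        (if (∀ j, f j ≤ α) ∧ t*α + ∑ j, f j = n then 1 else 0 : ℤ) :=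
        Finset.sum_congr rfl (fun α _ => inner α)
    _ = _ := by
        apply Finset.sum_subset
        · exact Finset.range_subset_range.2 (by omega)
        · intro α hα hnα
          apply Finset.sum_eq_zero
          intro f hf
          rw [if_neg]
          rintro ⟨h1, h2⟩
          simp only [mem_range] at hα hnα
          have : α ≤ t * α := Nat.le_mul_of_pos_left _ ht
          omega

lemma coeff_rep (d t n K : ℕ) :
    (coeff (R := ℤ) n) (rep d t K) =
      ∑ α ∈ range (K+1), ∑ f ∈ Fintype.piFinset (fun _ : Fin d => range (K+1)),
        (if (∀ j, f j ≤ α) ∧ t*α + ∑ j, f j = n then 1 else 0 : ℤ) := by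
  rw [rep, map_sum]
  apply Finset.sum_congr rfl
  intro α hα
  have hpow : ((∑ β ∈ range (α+1), (X:ℤ⟦X⟧)^β)^d)
      = ∑ f ∈ Fintype.piFinset (fun _ : Fin d => range (α+1)), (X:ℤ⟦X⟧)^(∑ j, f j) := by
    rw [← Fin.prod_const d (∑ β ∈ range (α+1), (X:ℤ⟦X⟧)^β), Finset.prod_univ_sum]
    exact Finset.sum_congr rfl fun f _ => Finset.prod_pow_eq_pow_sum _ _ _
  rw [hpow, Finset.mul_sum, map_sum]
  have step1 : ∀ f : Fin d → ℕ, (coeff (R := ℤ) n) ((X:ℤ⟦X⟧)^(t*α) * (X:ℤ⟦X⟧)^(∑ j, f j))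
      = (if n = t*α + ∑ j, f j then 1 else 0 : ℤ) := by
    intro f
    rw [← pow_add, PowerSeries.coeff_X_pow]
  calc (∑ f ∈ Fintype.piFinset (fun _ : Fin d => range (α+1)),
          (coeff (R := ℤ) n) ((X:ℤ⟦X⟧)^(t*α) * (X:ℤ⟦X⟧)^(∑ j, f j)))
      = ∑ f ∈ Fintype.piFinset (fun _ : Fin d => range (α+1)),
          (if (∀ j, f j ≤ α) ∧ t*α + ∑ j, f j = n then 1 else 0 : ℤ) := by
        apply Finset.sum_congr rfl
        intro f hf
        rw [step1 f]
        simp only [Fintype.mem_piFinset, mem_range] at hf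
        have h1 : ∀ j, f j ≤ α := fun j => Nat.lt_succ_iff.mp (hf j)
        by_cases h : t*α + ∑ j, f j = n
        · rw [if_pos h.symm, if_pos ⟨h1, h⟩]
        · rw [if_neg (fun hh => h hh.symm), if_neg (fun hh => h hh.2)]
    _ = _ := by
        apply Finset.sum_subset
        · intro f hf
          simp only [Fintype.mem_piFinset, mem_range] at hf ⊢
          intro j
          have := hf j
          simp only [mem_range] at hα
          omega
        · intro f hf hnf
          rw [if_neg]
          rintro ⟨h1, h2⟩
          apply hnf
          simp only [Fintype.mem_piFinset, mem_range] at hf ⊢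
          intro j
          have := h1 j
          omega

lemma Mser_sub_rep (d t K : ℕ) (ht : 1 ≤ t) : (X:ℤ⟦X⟧)^(K+1) ∣ Mser d t - rep d t K := by
  rw [PowerSeries.X_pow_dvd_iff]
  intro m hm
  rw [map_sub, coeff_Mser d t m K ht (by omega), coeff_rep, sub_self]

lemma rep_identity (d t K : ℕ) : (1 - X) * rep (d+1) t K = rep d t K - X * rep d (t+1) K := by
  unfold rep
  rw [Finset.mul_sum, Finset.mul_sum, ← Finset.sum_sub_distrib]
  apply Finset.sum_congr rfl
  intro α _
  have hgeom : (1 - (X:ℤ⟦X⟧)) * (∑ β ∈ range (α+1), (X:ℤ⟦X⟧)^β) = 1 - X^(α+1) := by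
    have h := geom_sum_mul (X:ℤ⟦X⟧) (α+1)
    linear_combination -h
  have e1 : (t+1)*α = t*α + α := by ring
  rw [e1, pow_add]
  linear_combination ((X:ℤ⟦X⟧)^(t*α) * (∑ β ∈ range (α+1), (X:ℤ⟦X⟧)^β)^d) * hgeom

lemma coeff_eq_of_dvd {A B : ℤ⟦X⟧} {n K : ℕ} (h : (X:ℤ⟦X⟧)^(K+1) ∣ A - B) (hn : n ≤ K) :
    (coeff (R := ℤ) n) A = (coeff (R := ℤ) n) B := by
  rw [PowerSeries.X_pow_dvd_iff] at h
  have := h n (by omega)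
  rw [map_sub, sub_eq_zero] at this
  exact this

lemma Mser_rec (d t : ℕ) (ht : 1 ≤ t) :
    (1 - X) * Mser (d+1) t = Mser d t - X * Mser d (t+1) := by
  ext n
  have h1 := Mser_sub_rep (d+1) t n ht
  have h2 := Mser_sub_rep d t n ht
  have h3 := Mser_sub_rep d (t+1) n (by omega)
  have hrep := rep_identity d t n
  apply coeff_eq_of_dvd (K := n) _ (le_refl n)
  have key : (1-X) * Mser (d+1) t - (Mser d t - X * Mser d (t+1)) =
      (1-X)*(Mser (d+1) t - rep (d+1) t n) - (Mser d t - rep d t n)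
        + X*(Mser d (t+1) - rep d (t+1) n) := by
    linear_combination hrep
  rw [key]
  exact dvd_add (dvd_sub (Dvd.dvd.mul_left h1 _) h2) (Dvd.dvd.mul_left h3 X)

lemma Mser_zero_fold (t : ℕ) (ht : 1 ≤ t) : Mser 0 t * (1 - X^t) = 1 := by
  ext n
  apply coeff_eq_of_dvd (K := n) _ (le_refl n)
  have h := Mser_sub_rep 0 t n ht
  have hrep : rep 0 t n * (1 - X^t) = 1 - ((X:ℤ⟦X⟧)^t)^(n+1) := by
    unfold rep
    have : ∀ α ∈ range (n+1), (X:ℤ⟦X⟧)^(t*α) * (∑ β ∈ range (α+1), (X:ℤ⟦X⟧)^β)^0 = ((X:ℤ⟦X⟧)^t)^α := by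
      intro α _; rw [pow_zero, mul_one, pow_mul]
    rw [Finset.sum_congr rfl this]
    have h2 := geom_sum_mul ((X:ℤ⟦X⟧)^t) (n+1)
    linear_combination -h2
  have key : Mser 0 t * (1 - X^t) - 1 =
      (Mser 0 t - rep 0 t n) * (1 - X^t) - ((X:ℤ⟦X⟧)^t)^(n+1) := by
    linear_combination hrep
  rw [key]
  apply dvd_sub
  · exact Dvd.dvd.mul_right h _
  · rw [← pow_mul]
    exact pow_dvd_pow _ (by nlinarith)

lemma one_sub_X_ne_zero : (1 - (X:ℤ⟦X⟧)) ≠ 0 := by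
  intro h
  have := congrArg (coeff (R := ℤ) 1) h
  simp at this

lemma aeval_F (F : ℕ → MvPolynomial (Fin 2) ℤ)
    (hF1 : F 1 = 1)
    (hFrec : ∀ e, 1 ≤ e →
      (1 - MvPolynomial.X 1) * F (e + 1) =
        (1 - MvPolynomial.X 0 * MvPolynomial.X 1 ^ (e + 1)) * F e
          - MvPolynomial.X 1 * (1 - MvPolynomial.X 0) *
            MvPolynomial.aeval ![MvPolynomial.X 0 * MvPolynomial.X 1, MvPolynomial.X 1] (F e)) :
    ∀ e, 1 ≤ e → ∀ t, 1 ≤ t →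
      MvPolynomial.aeval ![(X:ℤ⟦X⟧)^t, X] (F e) =
        Mser e t * ∏ i ∈ range (e+1), (1 - (X:ℤ⟦X⟧)^(t+i)) := by
  intro e he
  induction e, he using Nat.le_induction with
  | base =>
    intro t ht
    rw [hF1, map_one]
    apply mul_left_cancel₀ one_sub_X_ne_zero
    have hrec := Mser_rec 0 t ht
    have hg1 := Mser_zero_fold t ht
    have hg2 := Mser_zero_fold (t+1) (by omega)
    have hprod : ∏ i ∈ range 2, (1 - (X:ℤ⟦X⟧)^(t+i)) = (1 - X^t) * (1 - X^(t+1)) := by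
      simp [Finset.prod_range_succ]
    rw [hprod]
    linear_combination (-(1 - (X:ℤ⟦X⟧)^t) * (1 - (X:ℤ⟦X⟧)^(t+1))) * hrec
      - (1 - (X:ℤ⟦X⟧)^(t+1)) * hg1 + (X:ℤ⟦X⟧) * (1 - (X:ℤ⟦X⟧)^t) * hg2
  | succ e he IH =>
    intro t ht
    -- apply the aeval algebra map to hFrec
    have hstep := congrArg (MvPolynomial.aeval ![(X:ℤ⟦X⟧)^t, X]) (hFrec e he)
    simp only [map_mul, map_sub, map_one, map_pow, MvPolynomial.aeval_X] at hstep
    have hv0 : (![(X:ℤ⟦X⟧)^t, X] : Fin 2 → ℤ⟦X⟧) 0 = (X:ℤ⟦X⟧)^t := rfl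
    have hv1 : (![(X:ℤ⟦X⟧)^t, X] : Fin 2 → ℤ⟦X⟧) 1 = (X:ℤ⟦X⟧) := rfl
    rw [hv0, hv1] at hstep
    -- composition of aevals
    have hcomp : MvPolynomial.aeval (R := ℤ) ![(X:ℤ⟦X⟧)^t, X]
        (MvPolynomial.aeval (R := ℤ) ![MvPolynomial.X 0 * MvPolynomial.X 1, MvPolynomial.X 1] (F e))
        = MvPolynomial.aeval (R := ℤ) ![(X:ℤ⟦X⟧)^(t+1), X] (F e) := by
      rw [MvPolynomial.comp_aeval_apply (R := ℤ)
        (f := ![MvPolynomial.X 0 * MvPolynomial.X 1, MvPolynomial.X 1])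
        (φ := MvPolynomial.aeval (R := ℤ) ![(X:ℤ⟦X⟧)^t, X]) (p := F e)]
      have hv : (fun i => MvPolynomial.aeval (R := ℤ) ![(X:ℤ⟦X⟧)^t, X]
          (![MvPolynomial.X 0 * MvPolynomial.X 1, MvPolynomial.X 1] i)) = ![(X:ℤ⟦X⟧)^(t+1), X] := by
        funext i
        fin_cases i
        · simp [pow_succ]
        · simp
      rw [hv]
    rw [hcomp] at hstep
    rw [IH t ht, IH (t+1) (by omega)] at hstep
    apply mul_left_cancel₀ one_sub_X_ne_zero
    rw [hstep]
    have hrec := Mser_rec e t ht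
    have hP1 : ∏ i ∈ range (e+1+1), (1 - (X:ℤ⟦X⟧)^(t+i))
        = (1 - X^t) * ∏ i ∈ range (e+1), (1 - (X:ℤ⟦X⟧)^(t+1+i)) := by
      rw [Finset.prod_range_succ']
      have e0 : (1 - (X:ℤ⟦X⟧)^(t+0)) = 1 - X^t := by norm_num
      rw [e0, mul_comm]
      congr 1
      apply Finset.prod_congr rfl
      intro i _
      have e1 : t + (i+1) = t+1+i := by omega
      rw [e1]
    have hP2 : ∏ i ∈ range (e+1+1), (1 - (X:ℤ⟦X⟧)^(t+i))
        = (∏ i ∈ range (e+1), (1 - (X:ℤ⟦X⟧)^(t+i))) * (1 - X^(t+(e+1))) := by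
      rw [Finset.prod_range_succ]
    linear_combination (-(∏ i ∈ range (e+1+1), (1 - (X:ℤ⟦X⟧)^(t+i)))) * hrec
      - (Mser e t) * hP2 + (X:ℤ⟦X⟧) * (Mser e (t+1)) * hP1


lemma Dser_eq_prod (d : ℕ) : ∀ L t, Dser d L t = ∏ i ∈ range L, Mser d (t + i*(d+1)) := by
  intro L
  induction L with
  | zero => intro t; simp [Dser]
  | succ L IH =>
    intro t
    rw [show L+1 = L.succ from rfl]
    rw [Dser, IH (t+d+1), Finset.prod_range_succ']
    rw [mul_comm]
    congr 1
    · apply Finset.prod_congr rfl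
      intro i _
      congr 1
      ring_nf
    · norm_num

lemma X_pow_dvd_Mser_sub_one (d t : ℕ) (ht : 1 ≤ t) : (X:ℤ⟦X⟧)^t ∣ Mser d t - 1 := by
  rw [PowerSeries.X_pow_dvd_iff]
  intro m hm
  rw [map_sub, Mser, coeff_mk]
  rcases Nat.eq_zero_or_pos m with rfl | h
  · rw [Lcnt_zero ht]
    simp
  · rw [Lcnt_eq_zero h hm, PowerSeries.coeff_one, if_neg (by omega)]
    simp

lemma prod_sub_one_dvd {s : Finset ℕ} {f : ℕ → ℤ⟦X⟧} {K : ℕ}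
    (h : ∀ j ∈ s, (X:ℤ⟦X⟧)^K ∣ f j - 1) : (X:ℤ⟦X⟧)^K ∣ (∏ j ∈ s, f j) - 1 := by
  induction s using Finset.induction with
  | empty => simp
  | @insert a s ha IH =>
    rw [Finset.prod_insert ha]
    have h1 := h a (Finset.mem_insert_self a s)
    have h2 := IH (fun j hj => h j (Finset.mem_insert_of_mem hj))
    have key : f a * ∏ j ∈ s, f j - 1 = f a * ((∏ j ∈ s, f j) - 1) + (f a - 1) := by ring
    rw [key]
    exact dvd_add (Dvd.dvd.mul_left h2 _) h1

lemma Dser_coeff_stable (d t L L' m : ℕ) (ht : 1 ≤ t) (hL : L ≤ L') (hm : m < t + L*(d+1)) :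
    (coeff (R := ℤ) m) (Dser d L' t) = (coeff (R := ℤ) m) (Dser d L t) := by
  obtain ⟨k, rfl⟩ : ∃ k, L' = L + k := ⟨L'-L, by omega⟩
  have hsplit : Dser d (L+k) t = Dser d L t * ∏ i ∈ range k, Mser d (t + (L+i)*(d+1)) := by
    rw [Dser_eq_prod, Dser_eq_prod, Finset.prod_range_add]
  rw [hsplit]
  have hdvd : (X:ℤ⟦X⟧)^(t + L*(d+1)) ∣ (∏ i ∈ range k, Mser d (t + (L+i)*(d+1))) - 1 := by
    apply prod_sub_one_dvd
    intro j _
    refine dvd_trans (pow_dvd_pow X ?_) (X_pow_dvd_Mser_sub_one d (t + (L+j)*(d+1)) (by omega))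
    have : L*(d+1) ≤ (L+j)*(d+1) := Nat.mul_le_mul_right _ (Nat.le_add_right L j)
    omega
  have key : Dser d L t * (∏ i ∈ range k, Mser d (t + (L+i)*(d+1))) - Dser d L t
      = Dser d L t * ((∏ i ∈ range k, Mser d (t + (L+i)*(d+1))) - 1) := by ring
  have hK : t + L*(d+1) = (t + L*(d+1) - 1) + 1 := by omega
  apply coeff_eq_of_dvd (K := t + L*(d+1) - 1)
  · rw [key, ← hK]
    exact Dvd.dvd.mul_left hdvd _
  · omega

lemma Dser_coeff_small (d t L m : ℕ) (ht : 1 ≤ t) (hm : m < t) :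
    (coeff (R := ℤ) m) (Dser d L t) = if m = 0 then 1 else 0 := by
  rw [Dser_coeff_stable d t 0 L m ht (Nat.zero_le L) (by omega)]
  show (coeff (R := ℤ) m) (Dser d 0 t) = _
  rw [show Dser d 0 t = 1 from rfl, PowerSeries.coeff_one]


-- ## combinatorial infrastructure

lemma finsum_range (f : ℕ → ℕ) (N : ℕ) (h : ∀ k, N ≤ k → f k = 0) :
    ∑ᶠ k, f k = ∑ k ∈ range N, f k := by
  apply finsum_eq_finset_sum_of_support_subset
  intro k hk
  simp only [Function.mem_support] at hk
  simp only [coe_range, Set.mem_Iio]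
  by_contra hc
  exact hk (h k (by omega))

lemma finsum_peel (f : ℕ → ℕ) (N : ℕ) (h : ∀ k, N ≤ k → f k = 0) :
    ∑ᶠ k, f k = f 0 + ∑ᶠ k, f (k+1) := by
  rw [finsum_range f (N+1) (fun k hk => h k (by omega)),
    finsum_range (fun k => f (k+1)) N (fun k hk => h (k+1) (by omega)),
    Finset.sum_range_succ' f N]
  omega

lemma finsum_le_within (f : ℕ → ℕ) (N : ℕ) (h : ∀ k, N ≤ k → f k = 0) (s : Finset ℕ) :
    ∑ k ∈ s, f k ≤ ∑ᶠ k, f k := by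
  rw [finsum_range f N h]
  rcases Finset.exists_nat_subset_range s with ⟨M, hM⟩
  calc ∑ k ∈ s, f k ≤ ∑ k ∈ range (max N M), f k := by
        apply Finset.sum_le_sum_of_subset
        intro x hx
        have := hM hx
        simp only [mem_range] at *
        omega
    _ = ∑ k ∈ range N, f k := by
        rcases le_or_gt (max N M) N with h1 | h1
        · congr 1
          simp [Nat.max_eq_left, le_antisymm h1 (le_max_left _ _)]
        · rw [← Finset.sum_range_add_sum_Ico f (le_max_left N M)]
          have : ∑ k ∈ Ico N (max N M), f k = 0 :=
            Finset.sum_eq_zero (fun k hk => h k (mem_Ico.mp hk).1)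
          omega

variable {d : ℕ}

lemma DFold.a_succ_le (hd : 1 ≤ d) (D : DFold d) (k : ℕ) : D.a (k+1) ≤ D.a k :=
  le_trans (D.lower k ⟨0, hd⟩) (D.upper k ⟨0, hd⟩)

lemma DFold.a_anti (hd : 1 ≤ d) (D : DFold d) {k l : ℕ} (h : k ≤ l) : D.a l ≤ D.a k := by
  induction l with
  | zero =>
    have hk0 : k = 0 := by omega
    subst hk0; exact le_refl _
  | succ l IH =>
    rcases Nat.lt_or_ge k (l+1) with h1 | h1
    · exact le_trans (DFold.a_succ_le hd D l) (IH (by omega))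
    · have : k = l + 1 := by omega
      subst this; exact le_refl _

/-- the `b`-row-sum function, eventually zero -/
lemma DFold.bsum_eventually_zero (D : DFold d) :
    ∃ N, ∀ k, N ≤ k → (∑ j, D.b k j) = 0 := by
  obtain ⟨N, hN⟩ := D.fin
  exact ⟨N, fun k hk => Finset.sum_eq_zero fun j _ =>
    Nat.le_zero.mp (le_trans (D.upper k j) (le_of_eq (hN k hk)))⟩

lemma wt_one (D : DFold d) :
    ((∑ᶠ k, D.a k) + ∑ᶠ k, ∑ j, D.b k j) = wt 1 D := by
  obtain ⟨N, hN⟩ := D.fin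
  rw [wt, finsum_peel D.a N hN]
  omega

lemma wt_a_le (hd : 1 ≤ d) (ht : 1 ≤ t) {D : DFold d} {m : ℕ} (hD : wt t D = m) (k : ℕ) :
    D.a k ≤ m := by
  have h0 : D.a k ≤ D.a 0 := DFold.a_anti hd D (Nat.zero_le k)
  have : D.a 0 ≤ t * D.a 0 := Nat.le_mul_of_pos_left _ ht
  rw [wt] at hD
  omega

lemma wt_b_le (hd : 1 ≤ d) (ht : 1 ≤ t) {D : DFold d} {m : ℕ} (hD : wt t D = m) (k : ℕ) (j : Fin d) :
    D.b k j ≤ m :=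
  le_trans (D.upper k j) (wt_a_le hd ht hD k)

lemma wt_tail_zero (hd : 1 ≤ d) (ht : 1 ≤ t) {D : DFold d} {m : ℕ} (hD : wt t D = m) :
    ∀ k, m ≤ k → D.a k = 0 := by
  have key : D.a m = 0 := by
    by_contra hc
    have ha : 1 ≤ D.a m := Nat.pos_of_ne_zero hc
    have h1 : 1 ≤ D.a 0 := le_trans ha (DFold.a_anti hd D (Nat.zero_le m))
    have h2 : m ≤ ∑ k ∈ range m, D.a (k+1) := by
      calc m = ∑ k ∈ range m, 1 := by simp
        _ ≤ _ := Finset.sum_le_sum (fun k hk => le_trans ha (DFold.a_anti hd D (by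
            simp only [mem_range] at hk; omega)))
    obtain ⟨N, hN⟩ := D.fin
    have h3 : ∑ k ∈ range m, D.a (k+1) ≤ ∑ᶠ k, D.a (k+1) :=
      finsum_le_within (fun k => D.a (k+1)) N (fun k hk => hN (k+1) (by omega)) _
    have h4 : 1 ≤ t * D.a 0 := by
      have := Nat.mul_le_mul ht h1
      omega
    rw [wt] at hD
    omega
  intro k hk
  exact Nat.le_zero.mp (le_trans (DFold.a_anti hd D hk) (Nat.le_zero.mpr key))

lemma Aset_finite (hd : 1 ≤ d) (t m : ℕ) (ht : 1 ≤ t) :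
    {D : DFold d | wt t D = m}.Finite := by
  apply Set.Finite.of_finite_image
    (f := fun D : DFold d => fun k : Fin (m+1) => (D.a k, fun j => D.b k j))
  · apply Set.Finite.subset (Set.Finite.pi (fun _ : Fin (m+1) =>
      (Set.finite_Iic m).prod (Set.Finite.pi (fun _ : Fin d => Set.finite_Iic m))))
    rintro g ⟨D, hD, rfl⟩
    intro k _
    exact ⟨wt_a_le hd ht hD k, fun j _ => wt_b_le hd ht hD k j⟩
  · intro D hD D' hD' hfe
    simp only [Set.mem_setOf_eq] at hD hD'
    have hcomp : ∀ k : ℕ, k ≤ m → D.a k = D'.a k ∧ ∀ j, D.b k j = D'.b k j := by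
      intro k hk
      have := congrFun hfe (⟨k, by omega⟩ : Fin (m+1))
      simp only [Prod.mk.injEq] at this
      exact ⟨this.1, fun j => congrFun this.2 j⟩
    apply DFold.ext'
    · funext k
      rcases le_or_gt k m with h | h
      · exact (hcomp k h).1
      · rw [wt_tail_zero hd ht hD k (by omega), wt_tail_zero hd ht hD' k (by omega)]
    · funext k j
      rcases le_or_gt k m with h | h
      · exact (hcomp k h).2 j
      · have h1 : D.b k j = 0 := Nat.le_zero.mp (le_trans (D.upper k j)
          (Nat.le_zero.mpr (wt_tail_zero hd ht hD k (by omega))))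
        have h2 : D'.b k j = 0 := Nat.le_zero.mp (le_trans (D'.upper k j)
          (Nat.le_zero.mpr (wt_tail_zero hd ht hD' k (by omega))))
        rw [h1, h2]


-- ## peeling the top link

def DFold.tail (D : DFold d) : DFold d where
  a := fun k => D.a (k+1)
  b := fun k => D.b (k+1)
  upper := fun k j => D.upper (k+1) j
  lower := fun k j => D.lower (k+1) j
  fin := by
    obtain ⟨N, hN⟩ := D.fin
    exact ⟨N, fun k hk => hN (k+1) (by omega)⟩

def DFold.cons (α : ℕ) (β : Fin d → ℕ) (hβ : ∀ j, β j ≤ α) (D : DFold d) : DFold d where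
  a := fun k => match k with
    | 0 => α + D.a 0
    | (k+1) => D.a k
  b := fun k => match k with
    | 0 => fun j => β j + D.a 0
    | (k+1) => fun j => D.b k j
  upper := by
    rintro (_|k) j
    · exact Nat.add_le_add_right (hβ j) _
    · exact D.upper k j
  lower := by
    rintro (_|k) j
    · exact Nat.le_add_left _ _
    · exact D.lower k j
  fin := by
    obtain ⟨N, hN⟩ := D.fin
    exact ⟨N+2, fun k hk => by
      match k, hk with
      | (k+1), hk => exact hN k (by omega)⟩

lemma wt_cons (t α : ℕ) (β : Fin d → ℕ) (hβ : ∀ j, β j ≤ α) (D : DFold d) :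
    wt t (DFold.cons α β hβ D) = (t * α + ∑ j, β j) + wt (t+d+1) D := by
  obtain ⟨N, hN⟩ := D.fin
  obtain ⟨N', hN'⟩ := DFold.bsum_eventually_zero D
  have ha : ∑ᶠ k, (DFold.cons α β hβ D).a (k+1) = ∑ᶠ k, D.a k := rfl
  have hb : ∑ᶠ k, ∑ j, (DFold.cons α β hβ D).b k j
      = (∑ j, (β j + D.a 0)) + ∑ᶠ k, ∑ j, D.b k j := by
    exact finsum_peel (fun k => ∑ j, (DFold.cons α β hβ D).b k j) (N'+1)
      (fun k hk => by
        match k, hk with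
        | (k+1), hk => exact hN' k (by omega))
  have hb0 : (∑ j, (β j + D.a 0)) = (∑ j, β j) + d * D.a 0 := by
    rw [Finset.sum_add_distrib]
    simp [Finset.card_univ, mul_comm]
  have ha2 : ∑ᶠ k, D.a k = D.a 0 + ∑ᶠ k, D.a (k+1) := finsum_peel D.a N hN
  show t * (α + D.a 0) + (∑ᶠ k, (DFold.cons α β hβ D).a (k+1)) + _ = _
  rw [ha, hb, hb0, ha2, wt]
  ring

lemma cons_tail (hd : 1 ≤ d) (D : DFold d) :
    DFold.cons (D.a 0 - D.a 1) (fun j => D.b 0 j - D.a 1)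
      (fun j => Nat.sub_le_sub_right (D.upper 0 j) _) (DFold.tail D) = D := by
  have h1 : D.a 1 ≤ D.a 0 := DFold.a_succ_le hd D 0
  apply DFold.ext'
  · funext k
    match k with
    | 0 => show (D.a 0 - D.a 1) + D.a 1 = D.a 0; omega
    | (k+1) => rfl
  · funext k j
    match k with
    | 0 =>
      show (D.b 0 j - D.a 1) + D.a 1 = D.b 0 j
      have hl := D.lower 0 j
      norm_num at hl
      omega
    | (k+1) => rfl

def peel (D : DFold d) : (ℕ × (Fin d → ℕ)) × DFold d :=
  ((D.a 0 - D.a 1, fun j => D.b 0 j - D.a 1), DFold.tail D)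

lemma peel_cons (α : ℕ) (β : Fin d → ℕ) (hβ : ∀ j, β j ≤ α) (D : DFold d) :
    peel (DFold.cons α β hβ D) = ((α, β), D) := by
  unfold peel
  have h1 : (DFold.cons α β hβ D).a 0 = α + D.a 0 := rfl
  have h2 : (DFold.cons α β hβ D).a 1 = D.a 0 := rfl
  have h3 : ∀ j, (DFold.cons α β hβ D).b 0 j = β j + D.a 0 := fun j => rfl
  have h4 : DFold.tail (DFold.cons α β hβ D) = D := by
    apply DFold.ext' <;> rfl
  rw [h4]
  simp only [Prod.mk.injEq, h1, h2]
  refine ⟨⟨by omega, ?_⟩, trivial⟩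
  funext j
  rw [h3 j]
  omega

lemma cons_congr {α α' : ℕ} {β β' : Fin d → ℕ} {hβ : ∀ j, β j ≤ α} {hβ' : ∀ j, β' j ≤ α'}
    {D D' : DFold d} (h1 : α = α') (h2 : β = β') (h3 : D = D') :
    DFold.cons α β hβ D = DFold.cons α' β' hβ' D' := by
  subst h1; subst h2; subst h3; rfl

lemma peel_inj (hd : 1 ≤ d) : Function.Injective (peel (d := d)) := by
  intro D D' h
  rw [← cons_tail hd D, ← cons_tail hd D']
  unfold peel at h
  simp only [Prod.mk.injEq] at h
  exact cons_congr h.1.1 h.1.2 h.2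


-- ## counting

lemma ncard_prod' {A B : Type*} (s : Set A) (t : Set B) : (s ×ˢ t).ncard = s.ncard * t.ncard := by
  rw [← Nat.card_coe_set_eq, ← Nat.card_coe_set_eq, ← Nat.card_coe_set_eq,
    Nat.card_congr (Equiv.Set.prod s t), Nat.card_prod]

lemma ncard_biUnion {ι γ : Type*} [DecidableEq ι] (s : Finset ι) (f : ι → Set γ)
    (hfin : ∀ i ∈ s, (f i).Finite)
    (hdisj : ∀ i ∈ s, ∀ j ∈ s, i ≠ j → Disjoint (f i) (f j)) :
    (⋃ i ∈ s, f i).ncard = ∑ i ∈ s, (f i).ncard := by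
  induction s using Finset.induction with
  | empty => simp
  | @insert a s ha IH =>
    rw [Finset.set_biUnion_insert, Finset.sum_insert ha]
    rw [Set.ncard_union_eq ?hdis ?hf1 ?hf2]
    case hdis =>
      rw [Set.disjoint_left]
      intro x hx hx2
      simp only [Set.mem_iUnion] at hx2
      obtain ⟨i, hi, hxi⟩ := hx2
      have := hdisj a (Finset.mem_insert_self a s) i (Finset.mem_insert_of_mem hi)
        (by rintro rfl; exact ha hi)
      exact (Set.disjoint_left.mp this hx) hxi
    case hf1 => exact hfin a (Finset.mem_insert_self a s)
    case hf2 =>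
      apply Set.Finite.biUnion s.finite_toSet
      intro i hi
      exact hfin i (Finset.mem_insert_of_mem hi)
    rw [IH (fun i hi => hfin i (Finset.mem_insert_of_mem hi))
      (fun i hi j hj hij => hdisj i (Finset.mem_insert_of_mem hi) j (Finset.mem_insert_of_mem hj) hij)]

lemma linkSet_finite (d t n : ℕ) (ht : 1 ≤ t) : (linkSet d t n).Finite := by
  rw [← coe_linkFinset ht]
  exact (linkFinset d t n).finite_toSet

lemma wt_decomp (hd : 1 ≤ d) (t : ℕ) (D : DFold d) :
    wt t D = (t * (D.a 0 - D.a 1) + ∑ j, (D.b 0 j - D.a 1)) + wt (t+d+1) (DFold.tail D) := by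
  conv_lhs => rw [← cons_tail hd D]
  rw [wt_cons]

lemma Acnt_rec (hd : 1 ≤ d) (t m : ℕ) (ht : 1 ≤ t) :
    Acnt d t m = ∑ p ∈ antidiagonal m, Lcnt d t p.1 * Acnt d (t+d+1) p.2 := by
  classical
  have himg : peel '' {D : DFold d | wt t D = m}
      = ⋃ p ∈ antidiagonal m, (linkSet d t p.1) ×ˢ {D : DFold d | wt (t+d+1) D = p.2} := by
    ext x
    simp only [Set.mem_iUnion, Set.mem_image, Set.mem_setOf_eq, exists_prop]
    constructor
    · rintro ⟨D, hD, rfl⟩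
      refine ⟨(t * (D.a 0 - D.a 1) + ∑ j, (D.b 0 j - D.a 1), wt (t+d+1) (DFold.tail D)),
        ?_, ?_⟩
      · rw [Finset.HasAntidiagonal.mem_antidiagonal]
        rw [← wt_decomp hd t D, hD]
      · constructor
        · refine ⟨fun j => Nat.sub_le_sub_right (D.upper 0 j) _, rfl⟩
        · rfl
    · rintro ⟨p, hp, hx⟩
      rcases x with ⟨⟨α, β⟩, D'⟩
      obtain ⟨⟨hβ, hw1⟩, hw2⟩ := hx
      refine ⟨DFold.cons α β hβ D', ?_, peel_cons α β hβ D'⟩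
      rw [wt_cons, hw1, hw2]
      exact Finset.HasAntidiagonal.mem_antidiagonal.mp hp
  have hinj : Set.InjOn peel {D : DFold d | wt t D = m} := (peel_inj hd).injOn
  have h1 : Acnt d t m = (peel '' {D : DFold d | wt t D = m}).ncard :=
    (Set.ncard_image_of_injOn hinj).symm
  rw [h1, himg, ncard_biUnion]
  · apply Finset.sum_congr rfl
    intro p _
    rw [ncard_prod', Lcnt_eq_ncard ht]
    rfl
  · intro p _
    exact (linkSet_finite d t p.1 ht).prod (Aset_finite hd (t+d+1) p.2 (by omega))
  · intro p hp q hq hpq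
    rw [Set.disjoint_left]
    rintro ⟨⟨α, β⟩, D'⟩ ⟨⟨hβ, hw1⟩, hw2⟩ ⟨⟨hβ', hw1'⟩, hw2'⟩
    apply hpq
    apply Prod.ext
    · rw [← hw1, ← hw1']
    · simp only [Set.mem_setOf_eq] at hw2 hw2'
      rw [← hw2, ← hw2']


-- ## small cases and the main identification

def zeroD : DFold d :=
  ⟨fun _ => 0, fun _ _ => 0, fun _ _ => le_refl 0, fun _ _ => le_refl 0, ⟨0, fun _ _ => rfl⟩⟩

lemma wt_zeroD (t : ℕ) : wt t (zeroD (d := d)) = 0 := by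
  have hz : ∀ f : ℕ → ℕ, (∀ k, f k = 0) → ∑ᶠ k, f k = 0 := fun f hf => by
    rw [finsum_range f 0 (fun k _ => hf k)]; simp
  rw [wt, hz (fun k => zeroD.a (k+1)) (fun k => rfl),
    hz (fun k => ∑ j, zeroD.b k j) (fun k => by simp [zeroD])]
  simp [zeroD]

lemma eq_zeroD (hd : 1 ≤ d) {D : DFold d} (h : D.a 0 = 0) : D = zeroD := by
  have ha : ∀ k, D.a k = 0 := fun k =>
    Nat.le_zero.mp (le_trans (DFold.a_anti hd D (Nat.zero_le k)) (le_of_eq h))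
  apply DFold.ext'
  · funext k; exact ha k
  · funext k j; exact Nat.le_zero.mp (le_trans (D.upper k j) (le_of_eq (ha k)))

lemma Acnt_big (hd : 1 ≤ d) (t m : ℕ) (hm : m < t) : Acnt d t m = if m = 0 then 1 else 0 := by
  have ht : 1 ≤ t := by omega
  rcases Nat.eq_zero_or_pos m with rfl | h
  · rw [if_pos rfl, Acnt]
    have hset : {D : DFold d | wt t D = 0} = {zeroD} := by
      ext D
      simp only [Set.mem_setOf_eq, Set.mem_singleton_iff]
      constructor
      · intro hw
        apply eq_zeroD hd
        have h4 : t * D.a 0 = 0 := by rw [wt] at hw; omega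
        rcases Nat.mul_eq_zero.mp h4 with h5 | h5
        · omega
        · exact h5
      · rintro rfl; exact wt_zeroD t
    rw [hset, Set.ncard_singleton]
  · rw [if_neg (by omega), Acnt]
    convert Set.ncard_empty (DFold d)
    ext D
    simp only [Set.mem_setOf_eq, Set.mem_empty_iff_false, iff_false]
    intro hw
    have ha0 : D.a 0 = 0 := by
      have h1 : t * D.a 0 ≤ m := by rw [wt] at hw; omega
      by_contra hc
      have h2 : t ≤ t * D.a 0 := Nat.le_mul_of_pos_right t (Nat.pos_of_ne_zero hc)
      omega
    rw [eq_zeroD hd ha0, wt_zeroD] at hw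
    omega

lemma Acnt_coeff_base (hd : 1 ≤ d) (t m : ℕ) (ht : 1 ≤ t) (hmt : m < t) :
    (Acnt d t m : ℤ) = (coeff (R := ℤ) m) (Dser d m t) := by
  rw [Acnt_big hd t m hmt, Dser_coeff_small d t m m ht hmt]
  split_ifs <;> simp

lemma Acnt_eq_coeff (hd : 1 ≤ d) : ∀ m t, 1 ≤ t → (Acnt d t m : ℤ) = (coeff (R := ℤ) m) (Dser d m t) := by
  intro m
  induction m using Nat.strong_induction_on with
  | _ m IHm =>
    have inner : ∀ s t, 1 ≤ t → m < t + s → (Acnt d t m : ℤ) = (coeff (R := ℤ) m) (Dser d m t) := by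
      intro s
      induction s with
      | zero =>
        intro t ht hmt
        exact Acnt_coeff_base hd t m ht (by omega)
      | succ s IHs =>
        intro t ht hmt
        rcases Nat.lt_or_ge m t with hlt | hge
        · exact Acnt_coeff_base hd t m ht hlt
        · have hm1 : 1 ≤ m := le_trans ht hge
          obtain ⟨m', rfl⟩ : ∃ m', m = m' + 1 := ⟨m-1, by omega⟩
          rw [show Dser d (m'+1) t = Mser d t * Dser d m' (t+d+1) from rfl]
          rw [PowerSeries.coeff_mul, Acnt_rec hd t (m'+1) ht]
          push_cast
          apply Finset.sum_congr rfl
          intro p hp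
          have hsum := Finset.HasAntidiagonal.mem_antidiagonal.mp hp
          congr 1
          · rw [Mser, coeff_mk]
          · rcases Nat.lt_or_ge p.2 (m'+1) with h2 | h2
            · rw [IHm p.2 h2 (t+d+1) (by omega)]
              exact (Dser_coeff_stable d (t+d+1) p.2 m' p.2 (by omega) (by omega)
                (by have := Nat.le_mul_of_pos_right p.2 (show 0 < d+1 by omega); omega)).symm
            · have hp2 : p.2 = m'+1 := by omega
              rw [hp2, IHs (t+d+1) (by omega) (by omega)]
              exact Dser_coeff_stable d (t+d+1) m' (m'+1) (m'+1) (by omega) (by omega)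
                (by have := Nat.le_mul_of_pos_right m' (show 0 < d+1 by omega); omega)
    exact fun t ht => inner (m+1) t ht (by omega)


-- ## assembly pieces

lemma rFold_eq_Acnt (d m : ℕ) : rFold d m = Acnt d 1 m := by
  rw [rFold, Acnt]
  congr 1
  ext D
  simp only [Set.mem_setOf_eq]
  rw [wt_one D]

lemma Mprod (d N : ℕ) : Dser d N 1 = ∏ m ∈ Icc 1 N, Mser d ((m-1)*(d+1)+1) := by
  rw [Dser_eq_prod]
  rw [show Icc 1 N = Ico 1 (N+1) by rw [Finset.Ico_add_one_right_eq_Icc]]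
  rw [Finset.prod_Ico_eq_prod_range]
  simp only [Nat.add_sub_cancel]
  apply Finset.prod_congr rfl
  intro i _
  congr 1
  have e : 1 + i - 1 = i := by omega
  rw [e]
  ring

lemma Icc_one_eq_Ioc (x : ℕ) : Icc 1 x = Ioc 0 x := by
  ext y; simp; omega

lemma denom_prod (d N : ℕ) :
    (∏ m ∈ Icc 1 N, ∏ i ∈ range (d+1), (1 - (X:ℤ⟦X⟧)^(((m-1)*(d+1)+1)+i)))
      = ∏ j ∈ Icc 1 (N*(d+1)), (1 - (X:ℤ⟦X⟧)^j) := by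
  induction N with
  | zero => simp
  | succ N IH =>
    rw [Finset.prod_Icc_succ_top (by omega : 1 ≤ N+1), IH]
    have hle : N*(d+1) ≤ (N+1)*(d+1) := Nat.mul_le_mul_right _ (by omega)
    rw [Icc_one_eq_Ioc, Icc_one_eq_Ioc,
      ← Finset.prod_Ioc_consecutive _ (Nat.zero_le (N*(d+1))) hle]
    congr 1
    have e2 : Ioc (N*(d+1)) ((N+1)*(d+1)) = Ico (N*(d+1)+1) ((N+1)*(d+1)+1) := by
      ext y
      simp only [mem_Ioc, mem_Ico]
      have h : (N+1)*(d+1) = N*(d+1)+(d+1) := by ring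
      omega
    rw [e2, Finset.prod_Ico_eq_prod_range]
    have e3 : (N+1)*(d+1)+1 - (N*(d+1)+1) = d+1 := by
      have h : (N+1)*(d+1) = N*(d+1)+(d+1) := by ring
      omega
    rw [e3]
    apply Finset.prod_congr rfl
    intro i _
    have e4 : N+1-1 = N := by omega
    rw [e4]

lemma trailer_dvd (d N : ℕ) :
    (X:ℤ⟦X⟧)^(N+1) ∣ (∏ j ∈ Ioc N (N*(d+1)), (1 - (X:ℤ⟦X⟧)^j)) - 1 := by
  apply prod_sub_one_dvd
  intro j hj
  have hjN : N+1 ≤ j := (mem_Ioc.mp hj).1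
  have : (1 - (X:ℤ⟦X⟧)^j) - 1 = -((X:ℤ⟦X⟧)^j) := by ring
  rw [this]
  exact dvd_neg.mpr (pow_dvd_pow _ hjN)

lemma denom_split (d N : ℕ) (hd : 1 ≤ d) :
    ∏ j ∈ Icc 1 (N*(d+1)), (1 - (X:ℤ⟦X⟧)^j)
      = (∏ j ∈ Icc 1 N, (1 - (X:ℤ⟦X⟧)^j)) * ∏ j ∈ Ioc N (N*(d+1)), (1 - (X:ℤ⟦X⟧)^j) := by
  rw [Icc_one_eq_Ioc, Icc_one_eq_Ioc]
  rw [Finset.prod_Ioc_consecutive _ (Nat.zero_le N) (Nat.le_mul_of_pos_right N (by omega))]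

end DFoldAux

open DFoldAux

/-- The generating function identity
`∑_{n≥0} r_d(n) qⁿ = ∏_{n≥1} F_d(q^{(n-1)(d+1)+1}, q) / (1 - qⁿ)` in `ℤ⟦q⟧`,
stated coefficient-wise after clearing denominators:  both sides of the infinite-product
identity have `n`-th coefficient equal to that of the partial product over the first
`N ≥ n` factors, since every further factor is `1 + O(q^{N+1})`.
Here `F : ℕ → ℤ[q,w]` (variable `0` is `q`, variable `1` is `w`) is characterized by
`F 1 = 1` and the recurrence
`(1 - w) F_d(q,w) = (1 - q w^d) F_{d-1}(q,w) - w (1 - q) F_{d-1}(qw, w)`. -/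
theorem dfold_generating_function (d : ℕ) (hd : 1 ≤ d)
    (F : ℕ → MvPolynomial (Fin 2) ℤ)
    (hF1 : F 1 = 1)
    (hFrec : ∀ e, 1 ≤ e →
      (1 - MvPolynomial.X 1) * F (e + 1) =
        (1 - MvPolynomial.X 0 * MvPolynomial.X 1 ^ (e + 1)) * F e
          - MvPolynomial.X 1 * (1 - MvPolynomial.X 0) *
            MvPolynomial.aeval ![MvPolynomial.X 0 * MvPolynomial.X 1, MvPolynomial.X 1] (F e))
    (n N : ℕ) (hnN : n ≤ N) :
    PowerSeries.coeff (R := ℤ) n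
        ((PowerSeries.mk fun m => (rFold d m : ℤ)) *
          ∏ m ∈ Finset.Icc 1 N, (1 - (X : ℤ⟦X⟧) ^ m)) =
      PowerSeries.coeff (R := ℤ) n
        (∏ m ∈ Finset.Icc 1 N,
          MvPolynomial.aeval ![(X : ℤ⟦X⟧) ^ ((m - 1) * (d + 1) + 1), (X : ℤ⟦X⟧)] (F d)) := by

  classical
  have hfac : ∀ m ∈ Icc 1 N,
      MvPolynomial.aeval ![(X : ℤ⟦X⟧) ^ ((m - 1) * (d + 1) + 1), (X : ℤ⟦X⟧)] (F d)
        = Mser d ((m-1)*(d+1)+1) * ∏ i ∈ range (d+1), (1 - (X:ℤ⟦X⟧)^(((m-1)*(d+1)+1)+i)) :=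
    fun m _ => aeval_F F hF1 hFrec d hd ((m-1)*(d+1)+1) (by omega)
  have hRHS : (∏ m ∈ Finset.Icc 1 N,
        MvPolynomial.aeval ![(X : ℤ⟦X⟧) ^ ((m - 1) * (d + 1) + 1), (X : ℤ⟦X⟧)] (F d))
      = (Dser d N 1 * ∏ j ∈ Icc 1 N, (1 - (X:ℤ⟦X⟧)^j))
          * ∏ j ∈ Ioc N (N*(d+1)), (1 - (X:ℤ⟦X⟧)^j) := by
    rw [Finset.prod_congr rfl hfac, Finset.prod_mul_distrib, denom_prod, denom_split d N hd,
      Mprod]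
    ring
  rw [hRHS]
  have hdvd1 : (X:ℤ⟦X⟧)^(N+1) ∣ (PowerSeries.mk fun m => (rFold d m : ℤ)) - Dser d N 1 := by
    rw [PowerSeries.X_pow_dvd_iff]
    intro m hm
    rw [map_sub, coeff_mk, rFold_eq_Acnt, Acnt_eq_coeff hd m 1 (le_refl 1),
      Dser_coeff_stable d 1 m N m (le_refl 1) (by omega)
        (by have := Nat.le_mul_of_pos_right m (show 0 < d+1 by omega); omega),
      sub_self]
  have step1 : (coeff (R := ℤ) n) ((PowerSeries.mk fun m => (rFold d m : ℤ)) *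
      ∏ m ∈ Finset.Icc 1 N, (1 - (X : ℤ⟦X⟧) ^ m))
      = (coeff (R := ℤ) n) (Dser d N 1 * ∏ j ∈ Icc 1 N, (1 - (X:ℤ⟦X⟧)^j)) := by
    apply coeff_eq_of_dvd (K := N) _ hnN
    have key : (PowerSeries.mk fun m => (rFold d m : ℤ)) *
        (∏ m ∈ Finset.Icc 1 N, (1 - (X : ℤ⟦X⟧) ^ m))
        - Dser d N 1 * ∏ j ∈ Icc 1 N, (1 - (X:ℤ⟦X⟧)^j)
        = ((PowerSeries.mk fun m => (rFold d m : ℤ)) - Dser d N 1) *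
            ∏ j ∈ Icc 1 N, (1 - (X:ℤ⟦X⟧)^j) := by ring
    rw [key]
    exact Dvd.dvd.mul_right hdvd1 _
  rw [step1]
  apply coeff_eq_of_dvd (K := N) _ hnN |>.symm
  have key2 : (Dser d N 1 * ∏ j ∈ Icc 1 N, (1 - (X:ℤ⟦X⟧)^j))
        * (∏ j ∈ Ioc N (N*(d+1)), (1 - (X:ℤ⟦X⟧)^j))
      - Dser d N 1 * ∏ j ∈ Icc 1 N, (1 - (X:ℤ⟦X⟧)^j)
      = (Dser d N 1 * ∏ j ∈ Icc 1 N, (1 - (X:ℤ⟦X⟧)^j))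
          * ((∏ j ∈ Ioc N (N*(d+1)), (1 - (X:ℤ⟦X⟧)^j)) - 1) := by ring
  rw [key2]
  exact Dvd.dvd.mul_left (trailer_dvd d N) _
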